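/- Let 𝒟₁ = a(1-a)∂²/∂a² + (1-2a)∂/∂a - 1/4. For a, b in a simply connected domain with a ≠ b, the function ℒ(a,b) = 2∫_Δ dx dy/(√(x(1-x)(1-ax))√(y(1-y)(1-by))) satisfies 𝒟₁(ℒ) = (2/(a-b))·(√(1-b)/√(1-a) - 1). -/

import Mathlib

open MeasureTheory Set

/-- `ℒ(a,b) = 2∫_Δ dx dy/(√(x(1-x)(1-ax))·√(y(1-y)(1-by)))` over the triangle
`Δ = {(x,y) : 0 < y < x < 1}`. -/
noncomputable def Lfun (a b : ℝ) : ℝ :=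
  2 * ∫ p in {q : ℝ × ℝ | 0 < q.2 ∧ q.2 < q.1 ∧ q.1 < 1},
    (Real.sqrt (p.1 * (1 - p.1) * (1 - a * p.1)) *
     Real.sqrt (p.2 * (1 - p.2) * (1 - b * p.2)))⁻¹

namespace PFaux

noncomputable def f (c x : ℝ) : ℝ := (Real.sqrt (x*(1-x)*(1-c*x)))⁻¹
noncomputable def f1 (c x : ℝ) : ℝ :=
  x*(x*(1-x))/2 * ((Real.sqrt (x*(1-x)*(1-c*x)))^3)⁻¹
noncomputable def f2 (c x : ℝ) : ℝ :=
  3*x^2*(x*(1-x))^2/4 * ((Real.sqrt (x*(1-x)*(1-c*x)))^5)⁻¹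
noncomputable def G (b x : ℝ) : ℝ := ∫ y in (0:ℝ)..x, f b y
noncomputable def B (x : ℝ) : ℝ := (Real.sqrt (x*(1-x)))⁻¹
noncomputable def M (b : ℝ) : ℝ := ∫ y in Ioo (0:ℝ) 1, f b y

lemma c0_pos {x : ℝ} (hx : x ∈ Ioo (0:ℝ) 1) : 0 < x*(1-x) :=
  mul_pos hx.1 (by linarith [hx.2])

lemma A_pos {c x : ℝ} (hc : c ≤ 0) (hx : x ∈ Ioo (0:ℝ) 1) :
    0 < x*(1-x)*(1-c*x) :=
  mul_pos (c0_pos hx) (by nlinarith [hx.1, mul_nonpos_of_nonpos_of_nonneg hc hx.1.le])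

lemma c0_le_A {c x : ℝ} (hc : c ≤ 0) (hx : x ∈ Ioo (0:ℝ) 1) :
    x*(1-x) ≤ x*(1-x)*(1-c*x) := by
  nlinarith [c0_pos hx, mul_nonpos_of_nonpos_of_nonneg hc hx.1.le]

lemma sqrtA_pos {c x : ℝ} (hc : c ≤ 0) (hx : x ∈ Ioo (0:ℝ) 1) :
    0 < Real.sqrt (x*(1-x)*(1-c*x)) := Real.sqrt_pos.2 (A_pos hc hx)

lemma sqrtc0_pos {x : ℝ} (hx : x ∈ Ioo (0:ℝ) 1) : 0 < Real.sqrt (x*(1-x)) :=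
  Real.sqrt_pos.2 (c0_pos hx)

lemma sqrtc0_le_sqrtA {c x : ℝ} (hc : c ≤ 0) (hx : x ∈ Ioo (0:ℝ) 1) :
    Real.sqrt (x*(1-x)) ≤ Real.sqrt (x*(1-x)*(1-c*x)) :=
  Real.sqrt_le_sqrt (c0_le_A hc hx)

lemma f_nonneg (c x : ℝ) : 0 ≤ f c x := by
  unfold f; positivity

lemma f1_nonneg {c x : ℝ} (hx : x ∈ Ioo (0:ℝ) 1) : 0 ≤ f1 c x := by
  unfold f1
  have h1 : (0:ℝ) ≤ x := hx.1.le
  have h2 : (0:ℝ) ≤ 1 - x := by linarith [hx.2]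
  positivity

lemma f2_nonneg (c x : ℝ) : 0 ≤ f2 c x := by unfold f2; positivity

lemma f_le_B {c x : ℝ} (hc : c ≤ 0) (hx : x ∈ Ioo (0:ℝ) 1) : f c x ≤ B x := by
  unfold f B
  exact inv_anti₀ (sqrtc0_pos hx) (sqrtc0_le_sqrtA hc hx)

lemma sqrt_pow_le {c x : ℝ} (hc : c ≤ 0) (hx : x ∈ Ioo (0:ℝ) 1) (n : ℕ) :
    (Real.sqrt (x*(1-x)))^n ≤ (Real.sqrt (x*(1-x)*(1-c*x)))^n :=
  pow_le_pow_left₀ (sqrtc0_pos hx).le (sqrtc0_le_sqrtA hc hx) n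

lemma f1_le_B {c x : ℝ} (hc : c ≤ 0) (hx : x ∈ Ioo (0:ℝ) 1) : f1 c x ≤ B x := by
  have hs := sqrtc0_pos hx
  have hsq : (Real.sqrt (x*(1-x)))^2 = x*(1-x) := Real.sq_sqrt (c0_pos hx).le
  have h3 : ((Real.sqrt (x*(1-x)*(1-c*x)))^3)⁻¹ ≤ ((Real.sqrt (x*(1-x)))^3)⁻¹ :=
    inv_anti₀ (by positivity) (sqrt_pow_le hc hx 3)
  have : f1 c x ≤ x*(x*(1-x))/2 * ((Real.sqrt (x*(1-x)))^3)⁻¹ := by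
    unfold f1
    have h1 : (0:ℝ) ≤ x := hx.1.le
    have h2 : (0:ℝ) ≤ 1 - x := by linarith [hx.2]
    have : (0:ℝ) ≤ x*(x*(1-x))/2 := by positivity
    exact mul_le_mul_of_nonneg_left h3 this
  refine this.trans ?_
  have hx1 : x ≤ 1 := hx.2.le
  have : x*(x*(1-x))/2 * ((Real.sqrt (x*(1-x)))^3)⁻¹
      = x/2 * (Real.sqrt (x*(1-x)))⁻¹ := by
    set s := Real.sqrt (x*(1-x)) with hsdef
    rw [← hsq, pow_succ]
    have hs0 : s ≠ 0 := ne_of_gt hs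
    field_simp
  rw [this]
  unfold B
  have hB : (0:ℝ) ≤ (Real.sqrt (x*(1-x)))⁻¹ := by positivity
  nlinarith [hx.1]

lemma f2_le_B {c x : ℝ} (hc : c ≤ 0) (hx : x ∈ Ioo (0:ℝ) 1) : f2 c x ≤ B x := by
  have hs := sqrtc0_pos hx
  have hsq : (Real.sqrt (x*(1-x)))^2 = x*(1-x) := Real.sq_sqrt (c0_pos hx).le
  have h1 : (0:ℝ) ≤ x := hx.1.le
  have h2 : (0:ℝ) ≤ 1 - x := by linarith [hx.2]
  have h3 : ((Real.sqrt (x*(1-x)*(1-c*x)))^5)⁻¹ ≤ ((Real.sqrt (x*(1-x)))^5)⁻¹ :=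
    inv_anti₀ (by positivity) (sqrt_pow_le hc hx 5)
  have hstep : f2 c x ≤ 3*x^2*(x*(1-x))^2/4 * ((Real.sqrt (x*(1-x)))^5)⁻¹ := by
    unfold f2
    have : (0:ℝ) ≤ 3*x^2*(x*(1-x))^2/4 := by positivity
    exact mul_le_mul_of_nonneg_left h3 this
  refine hstep.trans ?_
  have key : 3*x^2*(x*(1-x))^2/4 * ((Real.sqrt (x*(1-x)))^5)⁻¹
      = 3*x^2/4 * (Real.sqrt (x*(1-x)))⁻¹ := by
    have : (Real.sqrt (x*(1-x)))^5 = (x*(1-x))^2 * Real.sqrt (x*(1-x)) := by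
      have : (Real.sqrt (x*(1-x)))^5 = ((Real.sqrt (x*(1-x)))^2)^2 * Real.sqrt (x*(1-x)) := by
        ring
      rw [this, hsq]
    set s := Real.sqrt (x*(1-x)) with hsdef
    rw [this, ← hsq]
    have hs0 : s ≠ 0 := ne_of_gt hs
    field_simp
  rw [key]
  unfold B
  have hB : (0:ℝ) ≤ (Real.sqrt (x*(1-x)))⁻¹ := by positivity
  nlinarith [hx.1, hx.2]

/- ### Integrability of the bound -/

lemma invsqrt_int : IntegrableOn (fun x : ℝ => (Real.sqrt x)⁻¹) (Ioo (0:ℝ) 1) := by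
  have h : IntervalIntegrable (fun x : ℝ => x ^ (-(1/2) : ℝ)) volume 0 1 :=
    intervalIntegral.intervalIntegrable_rpow' (by norm_num)
  have h2 := (intervalIntegrable_iff_integrableOn_Ioo_of_le (by norm_num : (0:ℝ) ≤ 1)).1 h
  refine h2.congr_fun (fun x hx => ?_) measurableSet_Ioo
  beta_reduce
  rw [Real.rpow_neg hx.1.le, Real.sqrt_eq_rpow]

lemma invsqrt1_int : IntegrableOn (fun x : ℝ => (Real.sqrt (1-x))⁻¹) (Ioo (0:ℝ) 1) := by
  have h : IntervalIntegrable (fun x : ℝ => (Real.sqrt x)⁻¹) volume 0 1 :=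
    (intervalIntegrable_iff_integrableOn_Ioo_of_le (by norm_num : (0:ℝ) ≤ 1)).2 invsqrt_int
  have h2 := (h.comp_sub_left 1).symm
  norm_num at h2
  exact (intervalIntegrable_iff_integrableOn_Ioo_of_le (by norm_num : (0:ℝ) ≤ 1)).1 h2

lemma B_meas : Measurable B := by
  have : Continuous fun x : ℝ => Real.sqrt (x*(1-x)) := by fun_prop
  exact this.measurable.inv

lemma B_le {x : ℝ} (hx : x ∈ Ioo (0:ℝ) 1) :
    B x ≤ Real.sqrt 2 * ((Real.sqrt x)⁻¹ + (Real.sqrt (1-x))⁻¹) := by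
  have h1 : (0:ℝ) < x := hx.1
  have h2 : (0:ℝ) < 1 - x := by linarith [hx.2]
  rcases le_or_gt x (1/2) with hhalf | hhalf
  · have hge : x/2 ≤ x*(1-x) := by nlinarith
    have : Real.sqrt (x/2) ≤ Real.sqrt (x*(1-x)) := Real.sqrt_le_sqrt hge
    have hBle : B x ≤ (Real.sqrt (x/2))⁻¹ :=
      inv_anti₀ (Real.sqrt_pos.2 (by linarith)) this
    have heq : (Real.sqrt (x/2))⁻¹ = Real.sqrt 2 * (Real.sqrt x)⁻¹ := by
      rw [show x/2 = x * (2:ℝ)⁻¹ by ring, Real.sqrt_mul h1.le, mul_inv,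
        Real.sqrt_inv, inv_inv, mul_comm]
    have hpos : (0:ℝ) ≤ Real.sqrt 2 * (Real.sqrt (1-x))⁻¹ := by positivity
    calc B x ≤ Real.sqrt 2 * (Real.sqrt x)⁻¹ := heq ▸ hBle
      _ ≤ _ := by rw [mul_add]; linarith
  · have hge : (1-x)/2 ≤ x*(1-x) := by nlinarith
    have : Real.sqrt ((1-x)/2) ≤ Real.sqrt (x*(1-x)) := Real.sqrt_le_sqrt hge
    have hBle : B x ≤ (Real.sqrt ((1-x)/2))⁻¹ :=
      inv_anti₀ (Real.sqrt_pos.2 (by linarith)) this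
    have heq : (Real.sqrt ((1-x)/2))⁻¹ = Real.sqrt 2 * (Real.sqrt (1-x))⁻¹ := by
      rw [show (1-x)/2 = (1-x) * (2:ℝ)⁻¹ by ring, Real.sqrt_mul h2.le, mul_inv,
        Real.sqrt_inv, inv_inv, mul_comm]
    have hpos : (0:ℝ) ≤ Real.sqrt 2 * (Real.sqrt x)⁻¹ := by positivity
    calc B x ≤ Real.sqrt 2 * (Real.sqrt (1-x))⁻¹ := heq ▸ hBle
      _ ≤ _ := by rw [mul_add]; linarith

lemma B_nonneg (x : ℝ) : 0 ≤ B x := by unfold B; positivity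

lemma B_int : IntegrableOn B (Ioo (0:ℝ) 1) := by
  have hint : IntegrableOn
      (fun x : ℝ => Real.sqrt 2 * ((Real.sqrt x)⁻¹ + (Real.sqrt (1-x))⁻¹))
      (Ioo (0:ℝ) 1) := ((invsqrt_int.add invsqrt1_int).const_mul _)
  refine hint.mono' (B_meas.aestronglyMeasurable.restrict) ?_
  filter_upwards [ae_restrict_mem measurableSet_Ioo] with x hx
  rw [Real.norm_eq_abs, abs_of_nonneg (B_nonneg x)]
  exact B_le hx

/- ### Measurability and integrability of f, f1, f2 -/

lemma f_meas (c : ℝ) : Measurable (f c) := by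
  have : Continuous fun x : ℝ => Real.sqrt (x*(1-x)*(1-c*x)) := by fun_prop
  exact this.measurable.inv

lemma f1_meas (c : ℝ) : Measurable (f1 c) := by
  have h1 : Continuous fun x : ℝ => x*(x*(1-x))/2 := by fun_prop
  have h2 : Continuous fun x : ℝ => (Real.sqrt (x*(1-x)*(1-c*x)))^3 := by fun_prop
  exact h1.measurable.mul h2.measurable.inv

lemma f2_meas (c : ℝ) : Measurable (f2 c) := by
  have h1 : Continuous fun x : ℝ => 3*x^2*(x*(1-x))^2/4 := by fun_prop
  have h2 : Continuous fun x : ℝ => (Real.sqrt (x*(1-x)*(1-c*x)))^5 := by fun_prop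
  exact h1.measurable.mul h2.measurable.inv

lemma f_int {c : ℝ} (hc : c ≤ 0) : IntegrableOn (f c) (Ioo (0:ℝ) 1) := by
  refine B_int.mono' ((f_meas c).aestronglyMeasurable.restrict) ?_
  filter_upwards [ae_restrict_mem measurableSet_Ioo] with x hx
  rw [Real.norm_eq_abs, abs_of_nonneg (f_nonneg c x)]
  exact f_le_B hc hx

/- ### Lemmas about G -/

lemma f_ii {b : ℝ} (hb : b ≤ 0) : IntervalIntegrable (f b) volume 0 1 :=
  (intervalIntegrable_iff_integrableOn_Ioo_of_le (by norm_num : (0:ℝ) ≤ 1)).2 (f_int hb)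

lemma G_contOn {b : ℝ} (hb : b ≤ 0) : ContinuousOn (G b) (Icc (0:ℝ) 1) := by
  have h : IntegrableOn (f b) (uIcc (0:ℝ) 1) := by
    rw [uIcc_of_le (by norm_num : (0:ℝ) ≤ 1),
      integrableOn_Icc_iff_integrableOn_Ioo]
    exact f_int hb
  have := intervalIntegral.continuousOn_primitive_interval h
  rwa [uIcc_of_le (by norm_num : (0:ℝ) ≤ 1)] at this

lemma G_nonneg {b : ℝ} {x : ℝ} (hx : x ∈ Icc (0:ℝ) 1) : 0 ≤ G b x :=
  intervalIntegral.integral_nonneg hx.1 (fun y _ => f_nonneg b y)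

lemma G_le_M {b : ℝ} (hb : b ≤ 0) {x : ℝ} (hx : x ∈ Icc (0:ℝ) 1) : G b x ≤ M b := by
  unfold G M
  rw [intervalIntegral.integral_of_le hx.1, integral_Ioc_eq_integral_Ioo]
  refine setIntegral_mono_set (f_int hb) ?_ ?_
  · filter_upwards [ae_restrict_mem measurableSet_Ioo] with y _ using f_nonneg b y
  · exact HasSubset.Subset.eventuallyLE (Ioo_subset_Ioo le_rfl hx.2)

lemma M_nonneg {b : ℝ} : 0 ≤ M b :=
  setIntegral_nonneg measurableSet_Ioo (fun y _ => f_nonneg b y)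

lemma G_hasDeriv {b : ℝ} (hb : b ≤ 0) {x : ℝ} (hx : x ∈ Ioo (0:ℝ) 1) :
    HasDerivAt (G b) (f b x) x := by
  refine intervalIntegral.integral_hasDerivAt_right
    ((f_ii hb).mono_set ?_) ⟨univ, Filter.univ_mem,
      ((f_meas b).aestronglyMeasurable.restrict)⟩ ?_
  · rw [uIcc_of_le (by norm_num : (0:ℝ) ≤ 1), uIcc_of_le hx.1.le]
    exact Icc_subset_Icc le_rfl hx.2.le
  · have hA : Real.sqrt (x*(1-x)*(1-b*x)) ≠ 0 := ne_of_gt (sqrtA_pos hb hx)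
    have hc : Continuous fun y : ℝ => Real.sqrt (y*(1-y)*(1-b*y)) := by fun_prop
    exact hc.continuousAt.inv₀ hA

/- ### Fubini -/

lemma Lfun_eq {b : ℝ} (hb : b ≤ 0) {c : ℝ} (hc : c ≤ 0) :
    Lfun c b = 2 * ∫ x in Ioo (0:ℝ) 1, f c x * G b x := by
  have hSm : MeasurableSet {q : ℝ × ℝ | 0 < q.2 ∧ q.2 < q.1 ∧ q.1 < 1} := by
    apply MeasurableSet.inter
    · exact measurableSet_lt measurable_const measurable_snd
    apply MeasurableSet.inter
    · exact measurableSet_lt measurable_snd measurable_fst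
    · exact measurableSet_lt measurable_fst measurable_const
  have hsub : {q : ℝ × ℝ | 0 < q.2 ∧ q.2 < q.1 ∧ q.1 < 1} ⊆ (Ioo (0:ℝ) 1) ×ˢ (Ioo (0:ℝ) 1) :=
    fun q hq => ⟨⟨lt_trans hq.1 hq.2.1, hq.2.2⟩, hq.1, lt_trans hq.2.1 hq.2.2⟩
  have hprod : IntegrableOn (fun p : ℝ × ℝ => f c p.1 * f b p.2)
      ((Ioo (0:ℝ) 1) ×ˢ (Ioo (0:ℝ) 1)) := by
    rw [IntegrableOn, Measure.volume_eq_prod, ← Measure.prod_restrict]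
    exact (f_int hc).mul_prod (f_int hb)
  have hS_int : IntegrableOn (fun p : ℝ × ℝ => f c p.1 * f b p.2)
      {q : ℝ × ℝ | 0 < q.2 ∧ q.2 < q.1 ∧ q.1 < 1} := hprod.mono_set hsub
  unfold Lfun
  congr 1
  have hfe : (fun p : ℝ × ℝ =>
      (Real.sqrt (p.1 * (1 - p.1) * (1 - c * p.1)) *
       Real.sqrt (p.2 * (1 - p.2) * (1 - b * p.2)))⁻¹)
      = fun p : ℝ × ℝ => f c p.1 * f b p.2 := by
    funext p; rw [mul_inv]; rfl
  rw [hfe, ← integral_indicator hSm, Measure.volume_eq_prod,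
    MeasureTheory.integral_prod]
  swap
  · rw [← Measure.volume_eq_prod]
    exact (integrable_indicator_iff hSm).2 hS_int
  rw [← integral_indicator measurableSet_Ioo]
  congr 1
  funext x
  by_cases hx : x ∈ Ioo (0:ℝ) 1
  · rw [indicator_of_mem hx]
    have hset : (fun y => indicator {q : ℝ × ℝ | 0 < q.2 ∧ q.2 < q.1 ∧ q.1 < 1}
        (fun p : ℝ × ℝ => f c p.1 * f b p.2) (x, y))
        = (Ioo (0:ℝ) x).indicator (fun y => f c x * f b y) := by
      funext y
      by_cases hy : y ∈ Ioo (0:ℝ) x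
      · rw [indicator_of_mem hy, indicator_of_mem]
        exact ⟨hy.1, hy.2, hx.2⟩
      · rw [indicator_of_notMem hy, indicator_of_notMem]
        intro hmem
        exact hy ⟨hmem.1, hmem.2.1⟩
    rw [hset, integral_indicator measurableSet_Ioo, MeasureTheory.integral_const_mul]
    unfold G
    rw [intervalIntegral.integral_of_le hx.1.le, integral_Ioc_eq_integral_Ioo]
  · rw [indicator_of_notMem hx]
    have hset : (fun y => indicator {q : ℝ × ℝ | 0 < q.2 ∧ q.2 < q.1 ∧ q.1 < 1}
        (fun p : ℝ × ℝ => f c p.1 * f b p.2) (x, y)) = fun _ => (0:ℝ) := by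
      funext y
      refine indicator_of_notMem ?_ _
      intro hmem
      exact hx ⟨lt_trans hmem.1 hmem.2.1, hmem.2.2⟩
    rw [hset, integral_zero]



/- ### Pointwise derivatives in the parameter -/

lemma f_hasDerivAt {x : ℝ} (hx : x ∈ Ioo (0:ℝ) 1) {c : ℝ} (hc : c ≤ 0) :
    HasDerivAt (fun u => f u x) (f1 c x) c := by
  have h1 : HasDerivAt (fun u : ℝ => u * x) x c := by simpa using (hasDerivAt_id c).mul_const x
  have h2 : HasDerivAt (fun u : ℝ => 1 - u * x) (-x) c := h1.const_sub 1
  have h3 : HasDerivAt (fun u : ℝ => x*(1-x)*(1-u*x)) (x*(1-x)*(-x)) c := h2.const_mul _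
  have hA : x*(1-x)*(1-c*x) ≠ 0 := ne_of_gt (A_pos hc hx)
  have hsqrt : HasDerivAt (fun u : ℝ => Real.sqrt (x*(1-x)*(1-u*x)))
      (1 / (2 * Real.sqrt (x*(1-x)*(1-c*x))) * (x*(1-x)*(-x))) c :=
    (Real.hasDerivAt_sqrt hA).comp c h3
  have hs0 : Real.sqrt (x*(1-x)*(1-c*x)) ≠ 0 := ne_of_gt (sqrtA_pos hc hx)
  have hinv := hsqrt.inv hs0
  refine hinv.congr_deriv ?_
  symm
  unfold f1
  set s := Real.sqrt (x*(1-x)*(1-c*x))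
  field_simp

lemma f1_hasDerivAt {x : ℝ} (hx : x ∈ Ioo (0:ℝ) 1) {c : ℝ} (hc : c ≤ 0) :
    HasDerivAt (fun u => f1 u x) (f2 c x) c := by
  have h1 : HasDerivAt (fun u : ℝ => u * x) x c := by simpa using (hasDerivAt_id c).mul_const x
  have h2 : HasDerivAt (fun u : ℝ => 1 - u * x) (-x) c := h1.const_sub 1
  have h3 : HasDerivAt (fun u : ℝ => x*(1-x)*(1-u*x)) (x*(1-x)*(-x)) c := h2.const_mul _
  have hA : x*(1-x)*(1-c*x) ≠ 0 := ne_of_gt (A_pos hc hx)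
  have hsqrt : HasDerivAt (fun u : ℝ => Real.sqrt (x*(1-x)*(1-u*x)))
      (1 / (2 * Real.sqrt (x*(1-x)*(1-c*x))) * (x*(1-x)*(-x))) c :=
    (Real.hasDerivAt_sqrt hA).comp c h3
  have hs0 : Real.sqrt (x*(1-x)*(1-c*x)) ≠ 0 := ne_of_gt (sqrtA_pos hc hx)
  have hpow := hsqrt.pow 3
  have hp0 : (Real.sqrt (x*(1-x)*(1-c*x)))^3 ≠ 0 := pow_ne_zero _ hs0
  have hinv := (hpow.inv hp0).const_mul (x*(x*(1-x))/2)
  refine hinv.congr_deriv ?_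
  symm
  simp only [Pi.pow_apply]
  unfold f2
  set s := Real.sqrt (x*(1-x)*(1-c*x))
  field_simp
  ring

/- ### Integrability of products with G -/

lemma G_aesm {b : ℝ} (hb : b ≤ 0) :
    AEStronglyMeasurable (G b) (volume.restrict (Ioo (0:ℝ) 1)) :=
  ((G_contOn hb).mono Ioo_subset_Icc_self).aestronglyMeasurable measurableSet_Ioo

lemma int_mulG {b : ℝ} (hb : b ≤ 0) {h : ℝ → ℝ} (hm : Measurable h)
    (hbd : ∀ x ∈ Ioo (0:ℝ) 1, |h x| ≤ B x) :
    IntegrableOn (fun x => h x * G b x) (Ioo (0:ℝ) 1) := by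
  refine (B_int.mul_const (M b)).mono' (hm.aestronglyMeasurable.restrict.mul (G_aesm hb)) ?_
  filter_upwards [ae_restrict_mem measurableSet_Ioo] with x hx
  have hxI : x ∈ Icc (0:ℝ) 1 := Ioo_subset_Icc_self hx
  rw [Real.norm_eq_abs, abs_mul, abs_of_nonneg (G_nonneg hxI)]
  exact mul_le_mul (hbd x hx) (G_le_M hb hxI) (G_nonneg hxI) (B_nonneg x)

/- ### Differentiation under the integral sign -/

lemma hasDerivAt_int {b : ℝ} (hb : b ≤ 0) {c : ℝ} (hc : c < 0)
    {F F' : ℝ → ℝ → ℝ}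
    (hFm : ∀ u : ℝ, Measurable (F u)) (hF'm : Measurable (F' c))
    (hFB : ∀ u ≤ (0:ℝ), ∀ x ∈ Ioo (0:ℝ) 1, 0 ≤ F u x ∧ F u x ≤ B x)
    (hF'B : ∀ u ≤ (0:ℝ), ∀ x ∈ Ioo (0:ℝ) 1, 0 ≤ F' u x ∧ F' u x ≤ B x)
    (hderiv : ∀ u ≤ (0:ℝ), ∀ x ∈ Ioo (0:ℝ) 1, HasDerivAt (fun v => F v x) (F' u x) u) :
    HasDerivAt (fun u => ∫ x in Ioo (0:ℝ) 1, F u x * G b x)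
      (∫ x in Ioo (0:ℝ) 1, F' c x * G b x) c := by
  have hε : (0:ℝ) < -c/2 := by linarith
  have hball : ∀ u ∈ Metric.ball c (-c/2), u ≤ 0 := by
    intro u hu
    rw [Metric.mem_ball, Real.dist_eq, abs_lt] at hu
    linarith [hu.2]
  have hres := hasDerivAt_integral_of_dominated_loc_of_deriv_le
    (μ := volume.restrict (Ioo (0:ℝ) 1)) (F := fun u x => F u x * G b x)
    (F' := fun u x => F' u x * G b x) (x₀ := c)
    (bound := fun x => B x * M b) (Metric.ball_mem_nhds c hε)
    (Filter.Eventually.of_forall fun u =>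
      ((hFm u).aestronglyMeasurable.restrict.mul (G_aesm hb)))
    ?_ (hF'm.aestronglyMeasurable.restrict.mul (G_aesm hb)) ?_ ?_ ?_
  · exact hres.2
  · -- integrability at c
    have := int_mulG hb (hFm c) (fun x hx => by
      rw [abs_of_nonneg (hFB c hc.le x hx).1]; exact (hFB c hc.le x hx).2)
    exact this
  · -- bound
    filter_upwards [ae_restrict_mem measurableSet_Ioo] with x hx
    intro u hu
    have hxI : x ∈ Icc (0:ℝ) 1 := Ioo_subset_Icc_self hx
    have h0 := (hF'B u (hball u hu) x hx)
    rw [Real.norm_eq_abs, abs_mul, abs_of_nonneg h0.1, abs_of_nonneg (G_nonneg hxI)]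
    exact mul_le_mul h0.2 (G_le_M hb hxI) (G_nonneg hxI) (B_nonneg x)
  · exact (B_int.mul_const (M b))
  · filter_upwards [ae_restrict_mem measurableSet_Ioo] with x hx
    intro u hu
    exact (hderiv u (hball u hu) x hx).mul_const _

lemma L_deriv1 {b : ℝ} (hb : b ≤ 0) {c : ℝ} (hc : c < 0) :
    HasDerivAt (fun u => Lfun u b) (2 * ∫ x in Ioo (0:ℝ) 1, f1 c x * G b x) c := by
  have h := (hasDerivAt_int hb hc (F := f) (F' := f1) f_meas (f1_meas c)
    (fun u hu x hx => ⟨f_nonneg u x, f_le_B hu hx⟩)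
    (fun u hu x hx => ⟨f1_nonneg hx, f1_le_B hu hx⟩)
    (fun u hu x hx => f_hasDerivAt hx hu)).const_mul (2:ℝ)
  refine h.congr_of_eventuallyEq ?_
  filter_upwards [Iio_mem_nhds hc] with u hu
  exact Lfun_eq hb (le_of_lt hu)

lemma L_deriv2 {b : ℝ} (hb : b ≤ 0) {c : ℝ} (hc : c < 0) :
    HasDerivAt (fun u => 2 * ∫ x in Ioo (0:ℝ) 1, f1 u x * G b x)
      (2 * ∫ x in Ioo (0:ℝ) 1, f2 c x * G b x) c :=
  (hasDerivAt_int hb hc (F := f1) (F' := f2) f1_meas (f2_meas c)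
    (fun u hu x hx => ⟨f1_nonneg hx, f1_le_B hu hx⟩)
    (fun u hu x hx => ⟨f2_nonneg u x, f2_le_B hu hx⟩)
    (fun u hu x hx => f1_hasDerivAt hx hu)).const_mul (2:ℝ)

lemma deriv_Lfun {b : ℝ} (hb : b ≤ 0) {c : ℝ} (hc : c < 0) :
    deriv (fun u => Lfun u b) c = 2 * ∫ x in Ioo (0:ℝ) 1, f1 c x * G b x :=
  (L_deriv1 hb hc).deriv

lemma deriv2_Lfun {b : ℝ} (hb : b ≤ 0) {a : ℝ} (ha : a < 0) :
    deriv (fun s => deriv (fun u => Lfun u b) s) a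
      = 2 * ∫ x in Ioo (0:ℝ) 1, f2 a x * G b x := by
  have hev : (fun s => deriv (fun u => Lfun u b) s)
      =ᶠ[nhds a] fun s => 2 * ∫ x in Ioo (0:ℝ) 1, f1 s x * G b x := by
    filter_upwards [Iio_mem_nhds ha] with s hs using deriv_Lfun hb hs
  rw [Filter.EventuallyEq.deriv_eq hev]
  exact (L_deriv2 hb ha).deriv



/- ### The key pointwise identity: the PF operator applied to f is an x-derivative -/

noncomputable def Dg (a x : ℝ) : ℝ :=
  a*(1-a)*f2 a x + (1-2*a)*f1 a x - (1/4)*f a x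

noncomputable def g (a x : ℝ) : ℝ :=
  -(1/2) * Real.sqrt (x*(1-x)) * ((Real.sqrt (1-a*x))^3)⁻¹

lemma one_sub_pos {a x : ℝ} (ha : a ≤ 0) (hx : 0 ≤ x) : 0 < 1 - a*x := by
  nlinarith [mul_nonpos_of_nonpos_of_nonneg ha hx]

lemma sqrt1ax_pos {a x : ℝ} (ha : a ≤ 0) (hx : 0 ≤ x) : 0 < Real.sqrt (1-a*x) :=
  Real.sqrt_pos.2 (one_sub_pos ha hx)

lemma g_hasDerivAt {a : ℝ} (ha : a ≤ 0) {x : ℝ} (hx : x ∈ Ioo (0:ℝ) 1) :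
    HasDerivAt (g a) (Dg a x) x := by
  have hc0 : (0:ℝ) < x*(1-x) := c0_pos hx
  have hs := sqrtc0_pos hx
  have ht := sqrt1ax_pos ha hx.1.le
  have hinner : HasDerivAt (fun y : ℝ => y*(1-y)) (1-2*x) x := by
    have h := (hasDerivAt_id x).mul ((hasDerivAt_id x).const_sub 1)
    refine h.congr_deriv ?_
    symm
    simp; ring
  have hsq : HasDerivAt (fun y : ℝ => Real.sqrt (y*(1-y)))
      (1/(2*Real.sqrt (x*(1-x))) * (1-2*x)) x :=
    (Real.hasDerivAt_sqrt (ne_of_gt hc0)).comp x hinner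
  have hu : HasDerivAt (fun y : ℝ => -(1/2) * Real.sqrt (y*(1-y)))
      (-(1/2) * (1/(2*Real.sqrt (x*(1-x))) * (1-2*x))) x := hsq.const_mul _
  have hlin : HasDerivAt (fun y : ℝ => 1 - a*y) (-a) x := by
    have h := ((hasDerivAt_id x).const_mul a).const_sub 1
    refine h.congr_deriv ?_
    symm
    simp
  have htd : HasDerivAt (fun y : ℝ => Real.sqrt (1-a*y))
      (1/(2*Real.sqrt (1-a*x)) * (-a)) x :=
    (Real.hasDerivAt_sqrt (ne_of_gt (one_sub_pos ha hx.1.le))).comp x hlin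
  have htp := htd.pow 3
  have hp0 : (Real.sqrt (1-a*x))^3 ≠ 0 := pow_ne_zero _ (ne_of_gt ht)
  have hti := htp.inv hp0
  have hprod := hu.mul hti
  refine hprod.congr_deriv ?_
  symm
  simp only [Pi.inv_apply, Pi.pow_apply]
  unfold Dg f f1 f2
  have hst : Real.sqrt (x*(1-x)*(1-a*x))
      = Real.sqrt (x*(1-x)) * Real.sqrt (1-a*x) := Real.sqrt_mul hc0.le _
  rw [hst]
  set s := Real.sqrt (x*(1-x)) with hsdef
  set t := Real.sqrt (1-a*x) with htdef
  have hs2 : s^2 = x*(1-x) := Real.sq_sqrt hc0.le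
  have ht2 : t^2 = 1-a*x := Real.sq_sqrt (one_sub_pos ha hx.1.le).le
  have hs0 : s ≠ 0 := ne_of_gt hs
  have ht0 : t ≠ 0 := ne_of_gt ht
  rw [← hs2]
  field_simp
  linear_combination ((-128)*s^9*t^16 + (384)*a*s^11 + (384)*a*s^11*t^2 + (384)*a*s^11*t^4 + (384)*a*s^11*t^6 + (384)*a*s^11*t^8 + (384)*a*s^11*t^10 + (384)*a*s^11*t^12 + (-384)*a*x*s^9 + (-384)*a*x*s^9*t^2 + (-384)*a*x*s^9*t^4 + (-384)*a*x*s^9*t^6 + (-384)*a*x*s^9*t^8 + (-384)*a*x*s^9*t^10 + (-384)*a*x*s^9*t^12 + (-384)*a*x*s^9*t^14 + (384)*a*x^2*s^9 + (384)*a*x^2*s^9*t^2 + (384)*a*x^2*s^9*t^4 + (384)*a*x^2*s^9*t^6 + (384)*a*x^2*s^9*t^8 + (384)*a*x^2*s^9*t^10 + (384)*a*x^2*s^9*t^12 + (-2304)*a^2*x*s^11 + (-1920)*a^2*x*s^11*t^2 + (-1536)*a^2*x*s^11*t^4 + (-1152)*a^2*x*s^11*t^6 + (-768)*a^2*x*s^11*t^8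 + (-384)*a^2*x*s^11*t^10 + (2304)*a^2*x^2*s^9 + (1920)*a^2*x^2*s^9*t^2 + (1536)*a^2*x^2*s^9*t^4 + (1152)*a^2*x^2*s^9*t^6 + (768)*a^2*x^2*s^9*t^8 + (384)*a^2*x^2*s^9*t^10 + (-2304)*a^2*x^3*s^9 + (-1920)*a^2*x^3*s^9*t^2 + (-1536)*a^2*x^3*s^9*t^4 + (-1152)*a^2*x^3*s^9*t^6 + (-768)*a^2*x^3*s^9*t^8 + (-384)*a^2*x^3*s^9*t^10 + (5760)*a^3*x^2*s^11 + (3840)*a^3*x^2*s^11*t^2 + (2304)*a^3*x^2*s^11*t^4 + (1152)*a^3*x^2*s^11*t^6 + (384)*a^3*x^2*s^11*t^8 + (-5760)*a^3*x^3*s^9 + (-3840)*a^3*x^3*s^9*t^2 + (-2304)*a^3*x^3*s^9*t^4 + (-1152)*a^3*x^3*s^9*t^6 + (-384)*a^3*x^3*s^9*t^8 + (5760)*a^3*x^4*s^9 + (3840)*a^3*x^4*s^9*t^2 + (2304)*a^3*x^4*s^9*t^4 + (1152)*a^3*x^4*s^9*t^6 + (384)*a^3*x^4*s^9*t^8 +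 (-7680)*a^4*x^3*s^11 + (-3840)*a^4*x^3*s^11*t^2 + (-1536)*a^4*x^3*s^11*t^4 + (-384)*a^4*x^3*s^11*t^6 + (7680)*a^4*x^4*s^9 + (3840)*a^4*x^4*s^9*t^2 + (1536)*a^4*x^4*s^9*t^4 + (384)*a^4*x^4*s^9*t^6 + (-7680)*a^4*x^5*s^9 + (-3840)*a^4*x^5*s^9*t^2 + (-1536)*a^4*x^5*s^9*t^4 + (-384)*a^4*x^5*s^9*t^6 + (5760)*a^5*x^4*s^11 + (1920)*a^5*x^4*s^11*t^2 + (384)*a^5*x^4*s^11*t^4 + (-5760)*a^5*x^5*s^9 + (-1920)*a^5*x^5*s^9*t^2 + (-384)*a^5*x^5*s^9*t^4 + (5760)*a^5*x^6*s^9 + (1920)*a^5*x^6*s^9*t^2 + (384)*a^5*x^6*s^9*t^4 + (-2304)*a^6*x^5*s^11 + (-384)*a^6*x^5*s^11*t^2 + (2304)*a^6*x^6*s^9 + (384)*a^6*x^6*s^9*t^2 + (-2304)*a^6*x^7*s^9 + (-384)*a^6*x^7*s^9*t^2 + (384)*a^7*x^6*s^11 + (-384)*a^7*x^7*s^9 +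 (384)*a^7*x^8*s^9) * ht2 + ((384)*a*s^9 + (-2688)*a^2*x*s^9 + (8064)*a^3*x^2*s^9 + (-13440)*a^4*x^3*s^9 + (13440)*a^5*x^4*s^9 + (-8064)*a^6*x^5*s^9 + (2688)*a^7*x^6*s^9 + (-384)*a^8*x^7*s^9) * hs2 + ((t^2 - 32*t^14*s^9)*(12*a)) * hs2 + ((t^2 - 32*t^14*s^9)*(-4*t^2 - 12*a*x)) * ht2


/- ### Integration by parts -/

noncomputable def H (a b x : ℝ) : ℝ :=
  ((Real.sqrt (1-a*x))^3)⁻¹ * (Real.sqrt (1-b*x))⁻¹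

lemma g_contOn {a : ℝ} (ha : a ≤ 0) : ContinuousOn (g a) (Icc (0:ℝ) 1) := by
  unfold g
  refine ContinuousOn.mul (Continuous.continuousOn (by fun_prop)) ?_
  refine ContinuousOn.inv₀ (Continuous.continuousOn (by fun_prop)) ?_
  exact fun x hx => pow_ne_zero _ (ne_of_gt (sqrt1ax_pos ha hx.1))

lemma H_contOn {a b : ℝ} (ha : a ≤ 0) (hb : b ≤ 0) :
    ContinuousOn (H a b) (Icc (0:ℝ) 1) := by
  unfold H
  refine ContinuousOn.mul ?_ ?_
  · refine ContinuousOn.inv₀ (Continuous.continuousOn (by fun_prop)) ?_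
    exact fun x hx => pow_ne_zero _ (ne_of_gt (sqrt1ax_pos ha hx.1))
  · refine ContinuousOn.inv₀ (Continuous.continuousOn (by fun_prop)) ?_
    exact fun x hx => ne_of_gt (sqrt1ax_pos hb hx.1)

lemma Dg_meas (a : ℝ) : Measurable (Dg a) := by
  unfold Dg
  exact ((measurable_const.mul (f2_meas a)).add
    (measurable_const.mul (f1_meas a))).sub (measurable_const.mul (f_meas a))

lemma Dg_abs_le {a : ℝ} (ha : a ≤ 0) {x : ℝ} (hx : x ∈ Ioo (0:ℝ) 1) :
    |Dg a x| ≤ (|a*(1-a)| + |1-2*a| + 1/4) * B x := by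
  have h2 := f2_le_B ha hx
  have h1 := f1_le_B ha hx
  have h0 := f_le_B ha hx
  have n2 := f2_nonneg a x
  have n1 := f1_nonneg (c := a) hx
  have n0 := f_nonneg a x
  have hBn := B_nonneg x
  have tri : |Dg a x| ≤ |a*(1-a)| * f2 a x + |1-2*a| * f1 a x + (1/4) * f a x := by
    unfold Dg
    calc |a*(1-a)*f2 a x + (1-2*a)*f1 a x - 1/4*f a x|
        ≤ |a*(1-a)*f2 a x + (1-2*a)*f1 a x| + |1/4*f a x| := abs_sub _ _
      _ ≤ |a*(1-a)*f2 a x| + |(1-2*a)*f1 a x| + |1/4*f a x| := by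
          gcongr; exact abs_add_le _ _
      _ = |a*(1-a)| * f2 a x + |1-2*a| * f1 a x + (1/4) * f a x := by
          rw [abs_mul (a*(1-a)), abs_mul (1-2*a), abs_mul (1/4:ℝ),
            abs_of_nonneg n2, abs_of_nonneg n1, abs_of_nonneg n0]
          norm_num
  refine tri.trans ?_
  have e2 : |a*(1-a)| * f2 a x ≤ |a*(1-a)| * B x :=
    mul_le_mul_of_nonneg_left h2 (abs_nonneg _)
  have e1 : |1-2*a| * f1 a x ≤ |1-2*a| * B x :=
    mul_le_mul_of_nonneg_left h1 (abs_nonneg _)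
  have e0 : (1/4:ℝ) * f a x ≤ (1/4) * B x := by linarith
  nlinarith [e2, e1, e0]

lemma DgG_int {a b : ℝ} (ha : a ≤ 0) (hb : b ≤ 0) :
    IntegrableOn (fun x => Dg a x * G b x) (Ioo (0:ℝ) 1) := by
  refine ((B_int.const_mul (|a*(1-a)| + |1-2*a| + 1/4)).mul_const (M b)).mono'
    ((Dg_meas a).aestronglyMeasurable.restrict.mul (G_aesm hb)) ?_
  filter_upwards [ae_restrict_mem measurableSet_Ioo] with x hx
  have hxI : x ∈ Icc (0:ℝ) 1 := Ioo_subset_Icc_self hx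
  rw [Real.norm_eq_abs, abs_mul, abs_of_nonneg (G_nonneg hxI)]
  exact mul_le_mul (Dg_abs_le ha hx) (G_le_M hb hxI) (G_nonneg hxI)
    (mul_nonneg (by positivity) (B_nonneg x))

lemma gf_eq {a b : ℝ} {x : ℝ} (hx : x ∈ Ioo (0:ℝ) 1) :
    g a x * f b x = -(1/2) * H a b x := by
  have hc0 : (0:ℝ) < x*(1-x) := c0_pos hx
  have hs0 : Real.sqrt (x*(1-x)) ≠ 0 := ne_of_gt (sqrtc0_pos hx)
  unfold g f H
  rw [Real.sqrt_mul hc0.le, mul_inv]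
  set s := Real.sqrt (x*(1-x))
  field_simp

lemma gf_int {a b : ℝ} (ha : a ≤ 0) (hb : b ≤ 0) :
    IntegrableOn (fun x => g a x * f b x) (Ioo (0:ℝ) 1) := by
  have hH0 : IntegrableOn (fun x => -(1/2) * H a b x) (Icc (0:ℝ) 1) :=
    ((H_contOn ha hb).integrableOn_Icc).const_mul _
  have hH : IntegrableOn (fun x => -(1/2) * H a b x) (Ioo (0:ℝ) 1) :=
    hH0.mono_set Ioo_subset_Icc_self
  exact hH.congr_fun (fun x hx => (gf_eq hx).symm) measurableSet_Ioo

lemma ibp {a b : ℝ} (ha : a ≤ 0) (hb : b ≤ 0) :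
    ∫ x in Ioo (0:ℝ) 1, Dg a x * G b x
      = (1/2) * ∫ x in Ioo (0:ℝ) 1, H a b x := by
  have hu_cont : ContinuousOn (fun x => g a x * G b x) (Icc (0:ℝ) 1) :=
    (g_contOn ha).mul (G_contOn hb)
  have hu_deriv : ∀ x ∈ Ioo (0:ℝ) 1, HasDerivWithinAt (fun x => g a x * G b x)
      (Dg a x * G b x + g a x * f b x) (Ioi x) x := fun x hx =>
    ((g_hasDerivAt ha hx).mul (G_hasDeriv hb hx)).hasDerivWithinAt
  have hsum_int : IntegrableOn (fun x => Dg a x * G b x + g a x * f b x)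
      (Ioo (0:ℝ) 1) := (DgG_int ha hb).add (gf_int ha hb)
  have hii : IntervalIntegrable (fun x => Dg a x * G b x + g a x * f b x)
      volume 0 1 :=
    (intervalIntegrable_iff_integrableOn_Ioo_of_le (by norm_num)).2 hsum_int
  have h0 : ∫ x in (0:ℝ)..1, (Dg a x * G b x + g a x * f b x)
      = g a 1 * G b 1 - g a 0 * G b 0 :=
    intervalIntegral.integral_eq_sub_of_hasDeriv_right_of_le (by norm_num)
      hu_cont hu_deriv hii
  have hg1 : g a 1 = 0 := by unfold g; norm_num
  have hg0 : g a 0 = 0 := by unfold g; norm_num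
  rw [hg1, hg0, zero_mul, zero_mul, sub_zero,
    intervalIntegral.integral_of_le (by norm_num : (0:ℝ) ≤ 1),
    integral_Ioc_eq_integral_Ioo,
    integral_add (DgG_int ha hb) (gf_int ha hb)] at h0
  have hgfH : ∫ x in Ioo (0:ℝ) 1, g a x * f b x
      = -(1/2) * ∫ x in Ioo (0:ℝ) 1, H a b x := by
    rw [← MeasureTheory.integral_const_mul]
    exact setIntegral_congr_fun measurableSet_Ioo (fun x hx => gf_eq hx)
  rw [hgfH] at h0
  linarith

/- ### The final elementary integral -/

lemma H_integral {a b : ℝ} (ha : a < 0) (hb : b < 0) (hab : a ≠ b) :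
    ∫ x in Ioo (0:ℝ) 1, H a b x
      = (2/(a-b)) * (Real.sqrt (1-b) / Real.sqrt (1-a) - 1) := by
  have hab' : a - b ≠ 0 := sub_ne_zero.2 hab
  have hderiv : ∀ x ∈ uIcc (0:ℝ) 1,
      HasDerivAt (fun y => (2/(a-b)) * (Real.sqrt (1-b*y) / Real.sqrt (1-a*y)))
        (H a b x) x := by
    intro x hxu
    rw [uIcc_of_le (by norm_num : (0:ℝ) ≤ 1)] at hxu
    have hta := sqrt1ax_pos ha.le hxu.1
    have htb := sqrt1ax_pos hb.le hxu.1
    have hlinb : HasDerivAt (fun y : ℝ => 1 - b*y) (-b) x := by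
      have h := ((hasDerivAt_id x).const_mul b).const_sub 1
      refine h.congr_deriv ?_; symm; simp
    have hlina : HasDerivAt (fun y : ℝ => 1 - a*y) (-a) x := by
      have h := ((hasDerivAt_id x).const_mul a).const_sub 1
      refine h.congr_deriv ?_; symm; simp
    have hv : HasDerivAt (fun y : ℝ => Real.sqrt (1-b*y))
        (1/(2*Real.sqrt (1-b*x)) * (-b)) x :=
      (Real.hasDerivAt_sqrt (ne_of_gt (one_sub_pos hb.le hxu.1))).comp x hlinb
    have hw : HasDerivAt (fun y : ℝ => Real.sqrt (1-a*y))
        (1/(2*Real.sqrt (1-a*x)) * (-a)) x :=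
      (Real.hasDerivAt_sqrt (ne_of_gt (one_sub_pos ha.le hxu.1))).comp x hlina
    have hdiv := (hv.div hw (ne_of_gt hta)).const_mul (2/(a-b))
    refine hdiv.congr_deriv ?_
    symm
    unfold H
    set ta := Real.sqrt (1-a*x) with htadef
    set tb := Real.sqrt (1-b*x) with htbdef
    have hta2 : ta^2 = 1-a*x := Real.sq_sqrt (one_sub_pos ha.le hxu.1).le
    have htb2 : tb^2 = 1-b*x := Real.sq_sqrt (one_sub_pos hb.le hxu.1).le
    have hta0 : ta ≠ 0 := ne_of_gt hta
    have htb0 : tb ≠ 0 := ne_of_gt htb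
    field_simp
    linear_combination (-a) * htb2 + b * hta2
  have hcont : IntervalIntegrable (H a b) volume 0 1 := by
    apply ContinuousOn.intervalIntegrable
    rw [uIcc_of_le (by norm_num : (0:ℝ) ≤ 1)]
    exact H_contOn ha.le hb.le
  have hFTC := intervalIntegral.integral_eq_sub_of_hasDerivAt hderiv hcont
  rw [intervalIntegral.integral_of_le (by norm_num : (0:ℝ) ≤ 1),
    integral_Ioc_eq_integral_Ioo] at hFTC
  rw [hFTC]
  norm_num [Real.sqrt_one]
  ring


/- ### Linear combination under the integral -/

lemma combo {a b : ℝ} (ha : a ≤ 0) (hb : b ≤ 0) :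
    a * (1 - a) * (2 * ∫ x in Ioo (0:ℝ) 1, f2 a x * G b x)
      + (1 - 2 * a) * (2 * ∫ x in Ioo (0:ℝ) 1, f1 a x * G b x)
      - (1/4) * (2 * ∫ x in Ioo (0:ℝ) 1, f a x * G b x)
    = 2 * ∫ x in Ioo (0:ℝ) 1, Dg a x * G b x := by
  have i2 : IntegrableOn (fun x => f2 a x * G b x) (Ioo (0:ℝ) 1) :=
    int_mulG hb (f2_meas a) (fun x hx => by
      rw [abs_of_nonneg (f2_nonneg a x)]; exact f2_le_B ha hx)
  have i1 : IntegrableOn (fun x => f1 a x * G b x) (Ioo (0:ℝ) 1) :=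
    int_mulG hb (f1_meas a) (fun x hx => by
      rw [abs_of_nonneg (f1_nonneg hx)]; exact f1_le_B ha hx)
  have i0 : IntegrableOn (fun x => f a x * G b x) (Ioo (0:ℝ) 1) :=
    int_mulG hb (f_meas a) (fun x hx => by
      rw [abs_of_nonneg (f_nonneg a x)]; exact f_le_B ha hx)
  have hfun : (fun x => Dg a x * G b x)
      = fun x => a*(1-a)*(f2 a x*G b x) + (1-2*a)*(f1 a x*G b x)
          - (1/4)*(f a x*G b x) := by
    funext x; unfold Dg; ring
  have iA : Integrable (fun x => a*(1-a)*(f2 a x*G b x) + (1-2*a)*(f1 a x*G b x))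
      (volume.restrict (Ioo (0:ℝ) 1)) := (i2.const_mul _).add (i1.const_mul _)
  have iB : Integrable (fun x => (1/4:ℝ)*(f a x*G b x))
      (volume.restrict (Ioo (0:ℝ) 1)) := i0.const_mul _
  have iC : Integrable (fun x => a*(1-a)*(f2 a x*G b x))
      (volume.restrict (Ioo (0:ℝ) 1)) := i2.const_mul _
  have iD : Integrable (fun x => (1-2*a)*(f1 a x*G b x))
      (volume.restrict (Ioo (0:ℝ) 1)) := i1.const_mul _
  rw [hfun, integral_sub iA iB, integral_add iC iD,
    MeasureTheory.integral_const_mul, MeasureTheory.integral_const_mul,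
    MeasureTheory.integral_const_mul]
  ring

end PFaux

/-- The first inhomogeneous Picard–Fuchs equation:
`𝒟₁(ℒ) = (2/(a-b))·(√(1-b)/√(1-a) - 1)` where
`𝒟₁ = a(1-a)∂²/∂a² + (1-2a)∂/∂a - 1/4`, for parameters `a, b < 0` with `a ≠ b`
(a simply connected region where the fixed positive branches of the square roots exist). -/
theorem stmt2 (a b : ℝ) (ha : a < 0) (hb : b < 0) (hab : a ≠ b) :
    a * (1 - a) * deriv (fun s => deriv (fun u => Lfun u b) s) a
      + (1 - 2 * a) * deriv (fun u => Lfun u b) a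
      - (1/4) * Lfun a b
    = (2 / (a - b)) * (Real.sqrt (1 - b) / Real.sqrt (1 - a) - 1) := by
  rw [PFaux.deriv2_Lfun hb.le ha, PFaux.deriv_Lfun hb.le ha, PFaux.Lfun_eq hb.le ha.le,
    PFaux.combo ha.le hb.le, PFaux.ibp ha.le hb.le]
  have hH := PFaux.H_integral ha hb hab
  linarith
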